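/- arXiv:1910.09880 — 4 statements merged into one kernel-verified Lean document; each statement's English description precedes it below -/
import Mathlib

section
/- Let d ≥ 1 and x, y ∈ ℝ^d. Let a, b ∈ ℝ^d be independent random vectors whose entries are i.i.d. real Gaussian N(0, 1/2). Then E[ (⟨x,a⟩² + ⟨x,b⟩²) (⟨y,a⟩² + ⟨y,b⟩²) ] = ‖x‖² ‖y‖² + ⟨x,y⟩², where ‖·‖ is the Euclidean norm and ⟨·,·⟩ the Euclidean inner product. (Equivalently: for u a standard complex Gaussian vector, E[|⟨x,u⟩|² |⟨y,u⟩|²] = ‖x‖²‖y‖² + ⟨x,y⟩².) -/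
open MeasureTheory ProbabilityTheory

/-- The dot product on `Fin d → ℝ`. -/
noncomputable def dotp {d : ℕ} (x y : Fin d → ℝ) : ℝ := ∑ i, x i * y i

/-- The standard Gaussian product measure `N(0, 1/2)^d` on `Fin d → ℝ`. -/
noncomputable def gaussHalf (d : ℕ) : Measure (Fin d → ℝ) :=
  Measure.pi fun _ => gaussianReal 0 (1/2)

section Aux
open Real Set NNReal

lemma sqrt_pi_pos : (0:ℝ) < √π := Real.sqrt_pos.mpr Real.pi_pos

lemma pdf_half (t : ℝ) : gaussianPDFReal 0 (1/2) t = (√π)⁻¹ * rexp (-t^2) := by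
  have hc : ((1/2 : ℝ≥0) : ℝ) = 1/2 := by norm_num
  simp only [gaussianPDFReal, hc]
  rw [show (2 : ℝ) * π * (1/2) = π by ring, show -(t-0)^2/(2*(1/2:ℝ)) = -t^2 by ring]

lemma integrable_pow_exp (n : ℕ) : Integrable (fun t : ℝ => t ^ n * rexp (-t^2)) := by
  have := integrable_rpow_mul_exp_neg_mul_sq (b := 1) one_pos
      (s := (n:ℝ)) (lt_of_lt_of_le neg_one_lt_zero (Nat.cast_nonneg n))
  simpa [Real.rpow_natCast] using this

lemma integral_gauss_eq (g : ℝ → ℝ) :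
    ∫ t, g t ∂(gaussianReal 0 (1/2)) = (√π)⁻¹ * ∫ t, g t * rexp (-t^2) := by
  rw [gaussianReal_of_var_ne_zero 0 (by norm_num : (1/2 : ℝ≥0) ≠ 0)]
  have hpdf : gaussianPDF 0 (1/2)
      = fun x => ((Real.toNNReal (gaussianPDFReal 0 (1/2) x) : ℝ≥0) : ENNReal) := rfl
  rw [hpdf, integral_withDensity_eq_integral_smul
    ((measurable_gaussianPDFReal 0 (1/2)).real_toNNReal) g, ← integral_const_mul]
  congr 1; funext t
  rw [NNReal.smul_def, smul_eq_mul, Real.coe_toNNReal _ (gaussianPDFReal_nonneg _ _ _), pdf_half]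
  ring

lemma integrable_pow_gauss (n : ℕ) :
    Integrable (fun t : ℝ => t ^ n) (gaussianReal 0 (1/2)) := by
  rw [gaussianReal_of_var_ne_zero 0 (by norm_num : (1/2 : ℝ≥0) ≠ 0)]
  rw [integrable_withDensity_iff (measurable_gaussianPDF 0 (1/2))
    (ae_of_all _ fun x => ENNReal.ofReal_lt_top)]
  have : (fun x : ℝ => x ^ n * (gaussianPDF 0 (1/2) x).toReal)
      = fun x : ℝ => (√π)⁻¹ * (x ^ n * rexp (-x^2)) := by
    funext x
    rw [gaussianPDF, ENNReal.toReal_ofReal (gaussianPDFReal_nonneg _ _ _), pdf_half]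
    ring
  rw [this]
  exact (integrable_pow_exp n).const_mul _

lemma integral_odd_zero {f : ℝ → ℝ} (h : ∀ x, f (-x) = - f x) : ∫ x, f x = 0 := by
  have hmp : MeasurePreserving (fun x : ℝ => -x) volume volume :=
    ⟨measurable_neg, Measure.map_neg_eq_self _⟩
  have hemb : MeasurableEmbedding (fun x : ℝ => -x) :=
    (Homeomorph.neg ℝ).isClosedEmbedding.measurableEmbedding
  have h2 := hmp.integral_comp hemb f
  simp only [h] at h2
  rw [integral_neg] at h2
  linarith


lemma gamma_pow_int (n : ℕ) (hn : 1 ≤ n) :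
    ∫ x in Ioi (0:ℝ), x ^ n * rexp (-x^2) = Real.Gamma (((n:ℝ)+1)/2) / 2 := by
  have hs : 0 < ((n:ℝ)+1)/2 := by positivity
  rw [Real.Gamma_eq_integral hs,
    ← integral_comp_rpow_Ioi_of_pos (g := fun y => rexp (-y) * y ^ (((n:ℝ)+1)/2 - 1)) zero_lt_two]
  rw [show ∫ x in Ioi (0:ℝ),
      (2 * x ^ ((2:ℝ) - 1)) • (rexp (-(x ^ (2:ℝ))) * (x ^ (2:ℝ)) ^ (((n:ℝ)+1)/2 - 1))
      = ∫ x in Ioi (0:ℝ), 2 * (x ^ n * rexp (-x^2)) from ?_, integral_const_mul]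
  · ring
  · refine setIntegral_congr_fun measurableSet_Ioi fun x hx => ?_
    have hx0 : 0 < x := hx
    have h2 : x ^ (2:ℝ) = x ^ (2:ℕ) := by
      rw [← Real.rpow_natCast x 2]; norm_num
    have h3 : (x ^ (2:ℕ) : ℝ) ^ (((n:ℝ)+1)/2 - 1) = x ^ (n - 1 : ℕ) := by
      rw [← Real.rpow_natCast x 2, ← Real.rpow_natCast x (n-1),
        ← Real.rpow_mul hx0.le]
      congr 1
      have : ((n - 1 : ℕ) : ℝ) = (n:ℝ) - 1 := by
        have := Nat.cast_sub hn (R := ℝ); simpa using this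
      rw [this]; ring
    rw [h2, h3, smul_eq_mul]
    have h4 : x ^ ((2:ℝ) - 1) = x := by
      rw [show (2:ℝ) - 1 = 1 by norm_num, Real.rpow_one]
    rw [h4]
    have h5 : x * x ^ (n - 1 : ℕ) = x ^ n := by
      rw [← pow_succ']
      congr 1; omega
    calc 2 * x * (rexp (-x ^ 2) * x ^ (n - 1 : ℕ))
        = 2 * ((x * x ^ (n-1 : ℕ)) * rexp (-x^2)) := by ring
      _ = 2 * (x ^ n * rexp (-x^2)) := by rw [h5]

lemma int_sq_exp : ∫ x : ℝ, x ^ 2 * rexp (-x^2) = √π / 2 := by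
  have h := gamma_pow_int 2 (by norm_num)
  have habs : ∫ x : ℝ, x ^ 2 * rexp (-x^2) = 2 * ∫ x in Ioi (0:ℝ), x ^ 2 * rexp (-x^2) := by
    rw [← integral_comp_abs (f := fun x => x ^ 2 * rexp (-x^2))]
    simp only [sq_abs]
  rw [habs, h, show ((2:ℕ):ℝ) + 1 = 3 by norm_num]
  have : Real.Gamma (3/2) = √π / 2 := by
    rw [show (3:ℝ)/2 = 1/2 + 1 by norm_num, Real.Gamma_add_one (by norm_num),
      Real.Gamma_one_half_eq]
    ring
  rw [this]; ring

lemma int_fourth_exp : ∫ x : ℝ, x ^ 4 * rexp (-x^2) = 3 * √π / 4 := by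
  have h := gamma_pow_int 4 (by norm_num)
  have habs : ∫ x : ℝ, x ^ 4 * rexp (-x^2) = 2 * ∫ x in Ioi (0:ℝ), x ^ 4 * rexp (-x^2) := by
    rw [← integral_comp_abs (f := fun x => x ^ 4 * rexp (-x^2))]
    simp only [sq_abs, Even.pow_abs (by decide : Even 4)]
  rw [habs, h, show ((4:ℕ):ℝ) + 1 = 5 by norm_num]
  have h32 : Real.Gamma (3/2) = √π / 2 := by
    rw [show (3:ℝ)/2 = 1/2 + 1 by norm_num, Real.Gamma_add_one (by norm_num),
      Real.Gamma_one_half_eq]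
    ring
  have : Real.Gamma (5/2) = 3 * √π / 4 := by
    rw [show (5:ℝ)/2 = 3/2 + 1 by norm_num, Real.Gamma_add_one (by norm_num), h32]
    ring
  rw [this]; ring

lemma mom0 : ∫ t : ℝ, t ^ 0 ∂(gaussianReal 0 (1/2)) = 1 := by simp

lemma mom1 : ∫ t : ℝ, t ^ 1 ∂(gaussianReal 0 (1/2)) = 0 := by
  rw [integral_gauss_eq (fun t => t ^ 1), integral_odd_zero, mul_zero]
  intro x; simp [neg_sq]

lemma mom2 : ∫ t : ℝ, t ^ 2 ∂(gaussianReal 0 (1/2)) = 1/2 := by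
  rw [integral_gauss_eq (fun t => t ^ 2), int_sq_exp]
  field_simp

lemma mom3 : ∫ t : ℝ, t ^ 3 ∂(gaussianReal 0 (1/2)) = 0 := by
  rw [integral_gauss_eq (fun t => t ^ 3), integral_odd_zero, mul_zero]
  intro x; simp [neg_sq, Odd.neg_pow (by decide : Odd 3)]

lemma mom4 : ∫ t : ℝ, t ^ 4 ∂(gaussianReal 0 (1/2)) = 3/4 := by
  rw [integral_gauss_eq (fun t => t ^ 4), int_fourth_exp]
  rw [inv_mul_eq_div, div_eq_iff sqrt_pi_pos.ne']
  ring

instance gaussHalf_prob (d : ℕ) : IsProbabilityMeasure (gaussHalf d) := by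
  unfold gaussHalf; infer_instance

lemma dotp_cons {d : ℕ} (v : Fin (d+1) → ℝ) (t : ℝ) (a : Fin d → ℝ) :
    dotp v (Fin.cons t a) = v 0 * t + dotp (fun j => v j.succ) a := by
  simp [dotp, Fin.sum_univ_succ]

lemma dotp_split {d : ℕ} (v w : Fin (d+1) → ℝ) :
    dotp v w = v 0 * w 0 + dotp (fun j => v j.succ) (fun j => w j.succ) := by
  simp [dotp, Fin.sum_univ_succ]

lemma integral_gaussHalf_succ (d : ℕ) (f : (Fin (d+1) → ℝ) → ℝ) :
    ∫ a, f a ∂gaussHalf (d+1)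
      = ∫ p : ℝ × (Fin d → ℝ), f (Fin.cons p.1 p.2)
          ∂((gaussianReal 0 (1/2)).prod (gaussHalf d)) := by
  have h := (measurePreserving_piFinSuccAbove
    (fun _ : Fin (d+1) => gaussianReal 0 (1/2)) 0).symm
  have h2 := h.integral_comp (MeasurableEquiv.measurableEmbedding _) f
  rw [gaussHalf, ← h2]
  refine integral_congr_ae (Filter.Eventually.of_forall fun p => ?_)
  simp_rw [MeasurableEquiv.piFinSuccAbove_symm_apply, Fin.insertNthEquiv,
    Fin.insertNth_zero]
  rfl

lemma integrable_gaussHalf_succ {d : ℕ} {f : (Fin (d+1) → ℝ) → ℝ} :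
    Integrable f (gaussHalf (d+1)) ↔
      Integrable (fun p : ℝ × (Fin d → ℝ) => f (Fin.cons p.1 p.2))
        ((gaussianReal 0 (1/2)).prod (gaussHalf d)) := by
  have h := (measurePreserving_piFinSuccAbove
    (fun _ : Fin (d+1) => gaussianReal 0 (1/2)) 0).symm
  rw [gaussHalf, ← h.integrable_comp_emb (MeasurableEquiv.measurableEmbedding _)]
  constructor <;> intro hi <;> refine hi.congr (Filter.Eventually.of_forall fun p => ?_) <;>
    simp_rw [Function.comp_def, MeasurableEquiv.piFinSuccAbove_symm_apply, Fin.insertNthEquiv,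
      Fin.insertNth_zero] <;> rfl

lemma dotp_zero (x a : Fin 0 → ℝ) : dotp x a = 0 := by
  simp [dotp]

lemma integrable_dotp_pow : ∀ (d : ℕ) (j k : ℕ), j ≤ 2 → k ≤ 2 → ∀ (x y : Fin d → ℝ),
    Integrable (fun a => dotp x a ^ j * dotp y a ^ k) (gaussHalf d) := by
  intro d
  induction d with
  | zero =>
    intro j k _ _ x y
    have : (fun a : Fin 0 → ℝ => dotp x a ^ j * dotp y a ^ k)
        = fun _ => (0:ℝ) ^ j * (0:ℝ) ^ k := by
      funext a; rw [dotp_zero, dotp_zero]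
    rw [this]
    exact integrable_const _
  | succ d ih =>
    intro j k hj hk x y
    rw [integrable_gaussHalf_succ]
    have expand : (fun p : ℝ × (Fin d → ℝ) =>
        dotp x (Fin.cons p.1 p.2) ^ j * dotp y (Fin.cons p.1 p.2) ^ k)
        = fun p => ∑ i ∈ Finset.range (j+1), ∑ l ∈ Finset.range (k+1),
            ((x 0)^i * (y 0)^l * (j.choose i) * (k.choose l)) *
              (p.1 ^ (i+l) * (dotp (fun m => x m.succ) p.2 ^ (j-i)
                * dotp (fun m => y m.succ) p.2 ^ (k-l))) := by
      funext p
      rw [dotp_cons, dotp_cons, add_pow, add_pow, Finset.sum_mul_sum]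
      refine Finset.sum_congr rfl fun i _ => Finset.sum_congr rfl fun l _ => ?_
      ring
    rw [expand]
    refine integrable_finset_sum _ fun i _ => integrable_finset_sum _ fun l _ => ?_
    exact ((integrable_pow_gauss (i+l)).mul_prod
      (ih (j-i) (k-l) (le_trans (Nat.sub_le _ _) hj) (le_trans (Nat.sub_le _ _) hk)
        (fun m => x m.succ) (fun m => y m.succ))).const_mul _

lemma term_integrable {d : ℕ} (c : ℝ) (m j k : ℕ) (hj : j ≤ 2) (hk : k ≤ 2)
    (u v : Fin d → ℝ) :
    Integrable (fun p : ℝ × (Fin d → ℝ) => c * (p.1 ^ m * (dotp u p.2 ^ j * dotp v p.2 ^ k)))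
      ((gaussianReal 0 (1/2)).prod (gaussHalf d)) :=
  ((integrable_pow_gauss m).mul_prod (integrable_dotp_pow d j k hj hk u v)).const_mul c

lemma term_integral {d : ℕ} (c : ℝ) (m j k : ℕ) (u v : Fin d → ℝ) :
    ∫ p : ℝ × (Fin d → ℝ), c * (p.1 ^ m * (dotp u p.2 ^ j * dotp v p.2 ^ k))
        ∂((gaussianReal 0 (1/2)).prod (gaussHalf d))
      = c * ((∫ t : ℝ, t ^ m ∂(gaussianReal 0 (1/2))) *
          ∫ a, dotp u a ^ j * dotp v a ^ k ∂gaussHalf d) := by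
  rw [integral_const_mul, integral_prod_mul (f := fun t : ℝ => t ^ m)
    (g := fun a => dotp u a ^ j * dotp v a ^ k)]

lemma integral_add4 {α : Type*} [MeasurableSpace α] {μ : Measure α} {f1 f2 f3 f4 : α → ℝ}
    (h1 : Integrable f1 μ) (h2 : Integrable f2 μ) (h3 : Integrable f3 μ)
    (h4 : Integrable f4 μ) :
    ∫ a, f1 a + (f2 a + (f3 a + f4 a)) ∂μ
      = (∫ a, f1 a ∂μ) + ((∫ a, f2 a ∂μ) + ((∫ a, f3 a ∂μ) + ∫ a, f4 a ∂μ)) := by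
  have e1 := integral_add h1 (h2.add (h3.add h4))
  have e2 := integral_add h2 (h3.add h4)
  have e3 := integral_add h3 h4
  simp only [Pi.add_apply] at e1 e2 e3
  rw [e1, e2, e3]

lemma ev00 {d : ℕ} (u v : Fin d → ℝ) :
    ∫ a, dotp u a ^ 0 * dotp v a ^ 0 ∂gaussHalf d = 1 := by simp

lemma integral_dotp_mul : ∀ (d : ℕ) (x y : Fin d → ℝ),
    ∫ a, dotp x a ^ 1 * dotp y a ^ 1 ∂gaussHalf d = dotp x y / 2 := by
  intro d
  induction d with
  | zero => intro x y; simp [dotp_zero]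
  | succ d ih =>
    intro x y
    rw [integral_gaussHalf_succ]
    have expand : (fun p : ℝ × (Fin d → ℝ) =>
        dotp x (Fin.cons p.1 p.2) ^ 1 * dotp y (Fin.cons p.1 p.2) ^ 1)
        = fun p =>
          (x 0 * y 0) * (p.1 ^ 2 * (dotp (fun m => x m.succ) p.2 ^ 0 * dotp (fun m => y m.succ) p.2 ^ 0))
          + ((x 0) * (p.1 ^ 1 * (dotp (fun m => x m.succ) p.2 ^ 0 * dotp (fun m => y m.succ) p.2 ^ 1))
          + ((y 0) * (p.1 ^ 1 * (dotp (fun m => x m.succ) p.2 ^ 1 * dotp (fun m => y m.succ) p.2 ^ 0))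
          + (1:ℝ) * (p.1 ^ 0 * (dotp (fun m => x m.succ) p.2 ^ 1 * dotp (fun m => y m.succ) p.2 ^ 1)))) := by
      funext p; rw [dotp_cons, dotp_cons]; ring
    rw [expand]
    have I1 := term_integrable (d := d) (x 0 * y 0) 2 0 0 (by norm_num) (by norm_num)
      (fun m => x m.succ) (fun m => y m.succ)
    have I2 := term_integrable (d := d) (x 0) 1 0 1 (by norm_num) (by norm_num)
      (fun m => x m.succ) (fun m => y m.succ)
    have I3 := term_integrable (d := d) (y 0) 1 1 0 (by norm_num) (by norm_num)
      (fun m => x m.succ) (fun m => y m.succ)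
    have I4 := term_integrable (d := d) (1:ℝ) 0 1 1 (by norm_num) (by norm_num)
      (fun m => x m.succ) (fun m => y m.succ)
    have E := integral_add4 I1 I2 I3 I4
    beta_reduce at E
    rw [E, term_integral, term_integral, term_integral, term_integral,
      mom0, mom1, mom2, ev00, ih, dotp_split x y]
    ring

lemma integral_add9 {α : Type*} [MeasurableSpace α] {μ : Measure α}
    {f1 f2 f3 f4 f5 f6 f7 f8 f9 : α → ℝ}
    (h1 : Integrable f1 μ) (h2 : Integrable f2 μ) (h3 : Integrable f3 μ)
    (h4 : Integrable f4 μ) (h5 : Integrable f5 μ) (h6 : Integrable f6 μ)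
    (h7 : Integrable f7 μ) (h8 : Integrable f8 μ) (h9 : Integrable f9 μ) :
    ∫ a, f1 a + (f2 a + (f3 a + (f4 a + (f5 a + (f6 a + (f7 a + (f8 a + f9 a))))))) ∂μ
      = (∫ a, f1 a ∂μ) + ((∫ a, f2 a ∂μ) + ((∫ a, f3 a ∂μ) + ((∫ a, f4 a ∂μ) +
        ((∫ a, f5 a ∂μ) + ((∫ a, f6 a ∂μ) + ((∫ a, f7 a ∂μ) + ((∫ a, f8 a ∂μ) +
          ∫ a, f9 a ∂μ))))))) := by
  have e8 := integral_add h8 h9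
  have e7 := integral_add h7 (h8.add h9)
  have e6 := integral_add h6 (h7.add (h8.add h9))
  have e5 := integral_add h5 (h6.add (h7.add (h8.add h9)))
  have e4 := integral_add h4 (h5.add (h6.add (h7.add (h8.add h9))))
  have e3 := integral_add h3 (h4.add (h5.add (h6.add (h7.add (h8.add h9)))))
  have e2 := integral_add h2 (h3.add (h4.add (h5.add (h6.add (h7.add (h8.add h9))))))
  have e1 := integral_add h1 (h2.add (h3.add (h4.add (h5.add (h6.add (h7.add (h8.add h9)))))))
  simp only [Pi.add_apply] at e1 e2 e3 e4 e5 e6 e7 e8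
  rw [e1, e2, e3, e4, e5, e6, e7, e8]

lemma ev20 {d : ℕ} (u v : Fin d → ℝ) :
    ∫ a, dotp u a ^ 2 * dotp v a ^ 0 ∂gaussHalf d = dotp u u / 2 := by
  have h := integral_dotp_mul d u u
  rw [← h]
  congr 1; funext a; ring

lemma ev02 {d : ℕ} (u v : Fin d → ℝ) :
    ∫ a, dotp u a ^ 0 * dotp v a ^ 2 ∂gaussHalf d = dotp v v / 2 := by
  have h := integral_dotp_mul d v v
  rw [← h]
  congr 1; funext a; ring

lemma integral_dotp_sq : ∀ (d : ℕ) (x y : Fin d → ℝ),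
    ∫ a, dotp x a ^ 2 * dotp y a ^ 2 ∂gaussHalf d
      = (dotp x x * dotp y y + 2 * dotp x y ^ 2) / 4 := by
  intro d
  induction d with
  | zero => intro x y; simp [dotp_zero]
  | succ d ih =>
    intro x y
    rw [integral_gaussHalf_succ]
    have expand : (fun p : ℝ × (Fin d → ℝ) =>
        dotp x (Fin.cons p.1 p.2) ^ 2 * dotp y (Fin.cons p.1 p.2) ^ 2)
        = fun p =>
          (1:ℝ) * (p.1 ^ 0 * (dotp (fun m => x m.succ) p.2 ^ 2 * dotp (fun m => y m.succ) p.2 ^ 2))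
          + ((2 * y 0) * (p.1 ^ 1 * (dotp (fun m => x m.succ) p.2 ^ 2 * dotp (fun m => y m.succ) p.2 ^ 1))
          + ((y 0 ^ 2) * (p.1 ^ 2 * (dotp (fun m => x m.succ) p.2 ^ 2 * dotp (fun m => y m.succ) p.2 ^ 0))
          + ((2 * x 0) * (p.1 ^ 1 * (dotp (fun m => x m.succ) p.2 ^ 1 * dotp (fun m => y m.succ) p.2 ^ 2))
          + ((4 * x 0 * y 0) * (p.1 ^ 2 * (dotp (fun m => x m.succ) p.2 ^ 1 * dotp (fun m => y m.succ) p.2 ^ 1))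
          + ((2 * x 0 * y 0 ^ 2) * (p.1 ^ 3 * (dotp (fun m => x m.succ) p.2 ^ 1 * dotp (fun m => y m.succ) p.2 ^ 0))
          + ((x 0 ^ 2) * (p.1 ^ 2 * (dotp (fun m => x m.succ) p.2 ^ 0 * dotp (fun m => y m.succ) p.2 ^ 2))
          + ((2 * x 0 ^ 2 * y 0) * (p.1 ^ 3 * (dotp (fun m => x m.succ) p.2 ^ 0 * dotp (fun m => y m.succ) p.2 ^ 1))
          + (x 0 ^ 2 * y 0 ^ 2) * (p.1 ^ 4 * (dotp (fun m => x m.succ) p.2 ^ 0 * dotp (fun m => y m.succ) p.2 ^ 0))))))))) := by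
      funext p; rw [dotp_cons, dotp_cons]; ring
    rw [expand]
    have I1 := term_integrable (d := d) (1:ℝ) 0 2 2 (by norm_num) (by norm_num)
      (fun m => x m.succ) (fun m => y m.succ)
    have I2 := term_integrable (d := d) (2 * y 0) 1 2 1 (by norm_num) (by norm_num)
      (fun m => x m.succ) (fun m => y m.succ)
    have I3 := term_integrable (d := d) (y 0 ^ 2) 2 2 0 (by norm_num) (by norm_num)
      (fun m => x m.succ) (fun m => y m.succ)
    have I4 := term_integrable (d := d) (2 * x 0) 1 1 2 (by norm_num) (by norm_num)
      (fun m => x m.succ) (fun m => y m.succ)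
    have I5 := term_integrable (d := d) (4 * x 0 * y 0) 2 1 1 (by norm_num) (by norm_num)
      (fun m => x m.succ) (fun m => y m.succ)
    have I6 := term_integrable (d := d) (2 * x 0 * y 0 ^ 2) 3 1 0 (by norm_num) (by norm_num)
      (fun m => x m.succ) (fun m => y m.succ)
    have I7 := term_integrable (d := d) (x 0 ^ 2) 2 0 2 (by norm_num) (by norm_num)
      (fun m => x m.succ) (fun m => y m.succ)
    have I8 := term_integrable (d := d) (2 * x 0 ^ 2 * y 0) 3 0 1 (by norm_num) (by norm_num)
      (fun m => x m.succ) (fun m => y m.succ)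
    have I9 := term_integrable (d := d) (x 0 ^ 2 * y 0 ^ 2) 4 0 0 (by norm_num) (by norm_num)
      (fun m => x m.succ) (fun m => y m.succ)
    have E := integral_add9 I1 I2 I3 I4 I5 I6 I7 I8 I9
    beta_reduce at E
    rw [E, term_integral, term_integral, term_integral, term_integral, term_integral,
      term_integral, term_integral, term_integral, term_integral,
      mom0, mom1, mom2, mom3, mom4, ev00, ev20 _ (fun m => y m.succ),
      ev02 (fun m => x m.succ) _, integral_dotp_mul, ih, dotp_split x y, dotp_split x x, dotp_split y y]
    ring

lemma dotp_self_eq {d : ℕ} (x : Fin d → ℝ) : (∑ i, x i ^ 2) = dotp x x := by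
  simp only [dotp]
  exact Finset.sum_congr rfl fun i _ => pow_two (x i)

end Aux

/-- For `a, b` independent with i.i.d. `N(0,1/2)` entries,
`E[(⟨x,a⟩² + ⟨x,b⟩²)(⟨y,a⟩² + ⟨y,b⟩²)] = ‖x‖²‖y‖² + ⟨x,y⟩²`. -/
theorem opu_kernel_deg_two (d : ℕ) (hd : 1 ≤ d) (x y : Fin d → ℝ) :
    ∫ p : (Fin d → ℝ) × (Fin d → ℝ),
        ((dotp x p.1) ^ 2 + (dotp x p.2) ^ 2) * ((dotp y p.1) ^ 2 + (dotp y p.2) ^ 2)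
        ∂((gaussHalf d).prod (gaussHalf d))
      = (∑ i, x i ^ 2) * (∑ i, y i ^ 2) + (dotp x y) ^ 2 := by
  have expand : (fun p : (Fin d → ℝ) × (Fin d → ℝ) =>
      ((dotp x p.1) ^ 2 + (dotp x p.2) ^ 2) * ((dotp y p.1) ^ 2 + (dotp y p.2) ^ 2))
      = fun p =>
        (dotp x p.1 ^ 2 * dotp y p.1 ^ 2) * 1
        + ((dotp x p.1 ^ 2 * dotp x p.1 ^ 0) * (dotp y p.2 ^ 2 * dotp y p.2 ^ 0)
        + ((dotp y p.1 ^ 2 * dotp y p.1 ^ 0) * (dotp x p.2 ^ 2 * dotp x p.2 ^ 0)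
        + (1:ℝ) * (dotp x p.2 ^ 2 * dotp y p.2 ^ 2))) := by
    funext p; ring
  rw [expand]
  have J1 := (integrable_dotp_pow d 2 2 (by norm_num) (by norm_num) x y).mul_prod
    (integrable_const (1:ℝ) (μ := gaussHalf d))
  have J2 := (integrable_dotp_pow d 2 0 (by norm_num) (by norm_num) x x).mul_prod
    (integrable_dotp_pow d 2 0 (by norm_num) (by norm_num) y y)
  have J3 := (integrable_dotp_pow d 2 0 (by norm_num) (by norm_num) y y).mul_prod
    (integrable_dotp_pow d 2 0 (by norm_num) (by norm_num) x x)
  have J4 := (integrable_const (1:ℝ) (μ := gaussHalf d)).mul_prod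
    (integrable_dotp_pow d 2 2 (by norm_num) (by norm_num) x y)
  have E := integral_add4 J1 J2 J3 J4
  beta_reduce at E
  rw [E,
    integral_prod_mul (f := fun a => dotp x a ^ 2 * dotp y a ^ 2) (g := fun _ => (1:ℝ)),
    integral_prod_mul (f := fun a => dotp x a ^ 2 * dotp x a ^ 0)
      (g := fun a => dotp y a ^ 2 * dotp y a ^ 0),
    integral_prod_mul (f := fun a => dotp y a ^ 2 * dotp y a ^ 0)
      (g := fun a => dotp x a ^ 2 * dotp x a ^ 0),
    integral_prod_mul (f := fun _ => (1:ℝ)) (g := fun a => dotp x a ^ 2 * dotp y a ^ 2),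
    integral_dotp_sq, ev20 x x, ev20 y y, integral_const]
  simp only [measure_univ, probReal_univ, ENNReal.toReal_one, smul_eq_mul, mul_one, one_mul]
  rw [dotp_self_eq x, dotp_self_eq y]
  ring
end

section
/- Let s ≥ 0 be a natural number, let c, t ∈ ℝ be arbitrary, and let a₁, a₂, b₁, b₂ be i.i.d. real Gaussian N(0, 1/2) random variables. Then E[ (a₁² + b₁²)^s ( (a₁ c + a₂ t)² + (b₁ c + b₂ t)² )^s ] = ∑_{i=0}^{s} (binom(s,i))² (s+i)! (s−i)! c^{2i} t^{2(s−i)}. (Equivalently: for u₁, u₂ i.i.d. standard complex Gaussians, E[|u₁|^{2s} |u₁ c + u₂ t|^{2s}] equals this sum.) -/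
open MeasureTheory ProbabilityTheory Real Set
open scoped NNReal ENNReal

noncomputable section

namespace OPUaux

lemma pdens (x : ℝ) : gaussianPDFReal 0 (1/2) x = (√π)⁻¹ * rexp (-x^2) := by
  rw [gaussianPDFReal]
  norm_num
  have h2 : (√2) ≠ 0 := by positivity
  field_simp

lemma gauss_half : gaussianReal 0 (1/2)
    = volume.withDensity (fun x => ((gaussianPDFReal 0 (1/2) x).toNNReal : ℝ≥0∞)) := by
  rw [gaussianReal_of_var_ne_zero _ (by norm_num)]
  rfl

variable {E : Type*} [NormedAddCommGroup E] [NormedSpace ℝ E]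

lemma integral_gauss (g : ℝ → E) :
    ∫ x, g x ∂(gaussianReal 0 (1/2)) = ∫ x, ((√π)⁻¹ * rexp (-x^2)) • g x := by
  rw [gauss_half, integral_withDensity_eq_integral_smul
    (measurable_gaussianPDFReal 0 (1/2)).real_toNNReal g]
  refine integral_congr_ae (Filter.Eventually.of_forall fun x => ?_)
  dsimp only
  rw [NNReal.smul_def, Real.coe_toNNReal _ (gaussianPDFReal_nonneg 0 (1/2) x), pdens]

lemma integrable_gauss_iff (g : ℝ → E) :
    Integrable g (gaussianReal 0 (1/2))
      ↔ Integrable (fun x => ((√π)⁻¹ * rexp (-x^2)) • g x) volume := by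
  rw [gauss_half, integrable_withDensity_iff_integrable_smul
    (measurable_gaussianPDFReal 0 (1/2)).real_toNNReal]
  constructor <;> intro h <;> refine h.congr (Filter.Eventually.of_forall fun x => ?_) <;>
    dsimp only <;> rw [NNReal.smul_def, Real.coe_toNNReal _ (gaussianPDFReal_nonneg 0 (1/2) x), pdens]

open Complex in
lemma key_rint (k : ℕ) :
    ∫ r in Ioi (0:ℝ), r ^ (2*k+1) * rexp (-r^2) = k.factorial / 2 := by
  have h := _root_.integral_rpow_mul_exp_neg_rpow (p := 2) (q := (2*(k:ℝ)+1)) two_pos (by have := Nat.cast_nonneg (α := ℝ) k; linarith)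
  rw [show ((2*(k:ℝ)+1)+1)/2 = (k:ℝ)+1 by ring, Real.Gamma_nat_eq_factorial] at h
  rw [show (k.factorial:ℝ)/2 = 1/2 * k.factorial by ring, ← h]
  refine setIntegral_congr_fun measurableSet_Ioi (fun x hx => ?_)
  rw [show (2*(k:ℝ)+1) = ((2*k+1 : ℕ) : ℝ) by push_cast; ring, Real.rpow_natCast,
    show (2:ℝ) = ((2:ℕ):ℝ) by norm_num, Real.rpow_natCast]

lemma int_pow_exp (n : ℕ) : Integrable (fun x : ℝ => x ^ n * rexp (-x^2)) volume := by
  have h := integrable_rpow_mul_exp_neg_mul_sq (b := 1) one_pos (s := (n:ℝ))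
    (by have := Nat.cast_nonneg (α := ℝ) n; linarith)
  refine h.congr (Filter.Eventually.of_forall fun x => ?_)
  dsimp only
  rw [Real.rpow_natCast]; norm_num

def Mg (n : ℕ) : ℝ := ∫ x, x ^ n ∂(gaussianReal 0 (1/2))

lemma dens_pow_eq (n : ℕ) : ∀ x : ℝ,
    ((√π)⁻¹ * rexp (-x^2)) * x ^ n = (√π)⁻¹ * (x ^ n * rexp (-x^2)) := fun x => by ring

lemma int_pow_vol (n : ℕ) :
    Integrable (fun x : ℝ => ((√π)⁻¹ * rexp (-x^2)) * x ^ n) volume := by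
  simp only [dens_pow_eq]
  exact (int_pow_exp n).const_mul _

lemma int_pow_gauss (n : ℕ) : Integrable (fun x : ℝ => x ^ n) (gaussianReal 0 (1/2)) := by
  rw [integrable_gauss_iff]
  simpa only [smul_eq_mul] using int_pow_vol n

lemma conv1 (n : ℕ) :
    ∫ x, ((√π)⁻¹ * rexp (-x^2)) * x ^ n = Mg n := by
  rw [Mg, integral_gauss]
  simp only [smul_eq_mul]

-- complex versions
lemma CL1 (n : ℕ) : Integrable (fun x : ℝ => (x:ℂ) ^ n) (gaussianReal 0 (1/2)) := by
  have := (int_pow_gauss n).ofReal (𝕜 := ℂ)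
  refine this.congr (Filter.Eventually.of_forall fun x => ?_)
  push_cast
  rfl

lemma CL2 (n : ℕ) : ∫ x, (x:ℂ) ^ n ∂(gaussianReal 0 (1/2)) = (Mg n : ℂ) := by
  rw [Mg]
  simp only [show ∀ x:ℝ, (x:ℂ)^n = ((x^n : ℝ) : ℂ) from fun x => by push_cast; rfl]
  exact integral_ofReal

lemma CLv1 (n : ℕ) :
    Integrable (fun x : ℝ => ((((√π)⁻¹ * rexp (-x^2)) * x ^ n : ℝ) : ℂ)) volume :=
  (int_pow_vol n).ofReal

lemma CLv2 (n : ℕ) :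
    ∫ x, ((((√π)⁻¹ * rexp (-x^2)) * x ^ n : ℝ) : ℂ) = ((Mg n : ℝ) : ℂ) := by
  rw [← conv1 n]
  exact integral_ofReal

def Kc (m n a b : ℕ) : ℂ :=
  (m.choose a) * (n.choose b) * Complex.I^(m-a) * (-Complex.I)^(n-b)

def F (m n : ℕ) (p : ℝ × ℝ) : ℂ :=
  ((p.1:ℂ) + p.2 * Complex.I)^m * ((p.1:ℂ) - p.2 * Complex.I)^n

lemma claimA (m n : ℕ) (p : ℝ × ℝ) :
    F m n p = ∑ a ∈ Finset.range (m+1), ∑ b ∈ Finset.range (n+1),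
      Kc m n a b * ((p.1:ℂ)^(a+b) * (p.2:ℂ)^(m+n-a-b)) := by
  rw [F, show ((p.1:ℂ) - p.2*Complex.I) = (p.1:ℂ) + (-((p.2:ℂ)*Complex.I)) by ring,
    add_pow, add_pow, Finset.sum_mul_sum]
  refine Finset.sum_congr rfl fun a ha => Finset.sum_congr rfl fun b hb => ?_
  have ha' : a ≤ m := Finset.mem_range_succ_iff.mp ha
  have hb' : b ≤ n := Finset.mem_range_succ_iff.mp hb
  simp only [Kc]
  have h1 : ((p.2:ℂ)*Complex.I)^(m-a) = (p.2:ℂ)^(m-a) * Complex.I^(m-a) := mul_pow _ _ _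
  have h2 : (-((p.2:ℂ)*Complex.I))^(n-b) = (p.2:ℂ)^(n-b) * (-Complex.I)^(n-b) := by
    rw [← mul_neg, mul_pow]
  have h3 : (p.2:ℂ)^(m+n-a-b) = (p.2:ℂ)^(m-a) * (p.2:ℂ)^(n-b) := by
    rw [← pow_add]; congr 1; omega
  rw [h1, h2, h3]
  ring

lemma intF (m n : ℕ) :
    Integrable (F m n) ((gaussianReal 0 (1/2)).prod (gaussianReal 0 (1/2))) := by
  rw [show F m n = fun p => ∑ a ∈ Finset.range (m+1), ∑ b ∈ Finset.range (n+1),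
      Kc m n a b * ((p.1:ℂ)^(a+b) * (p.2:ℂ)^(m+n-a-b)) from funext (claimA m n)]
  exact integrable_finset_sum _ fun a _ => integrable_finset_sum _ fun b _ =>
    ((CL1 _).mul_prod (CL1 _)).const_mul _

lemma SInt (m n : ℕ) :
    ∫ p, F m n p ∂((gaussianReal 0 (1/2)).prod (gaussianReal 0 (1/2)))
      = ∑ a ∈ Finset.range (m+1), ∑ b ∈ Finset.range (n+1),
          Kc m n a b * ((Mg (a+b) : ℂ) * (Mg (m+n-a-b) : ℂ)) := by
  rw [show (fun p => F m n p) = fun p => ∑ a ∈ Finset.range (m+1), ∑ b ∈ Finset.range (n+1),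
      Kc m n a b * ((p.1:ℂ)^(a+b) * (p.2:ℂ)^(m+n-a-b)) from funext (claimA m n)]
  rw [integral_finset_sum _ (fun a _ => integrable_finset_sum _ fun b _ =>
    ((CL1 _).mul_prod (CL1 _)).const_mul _)]
  refine Finset.sum_congr rfl fun a _ => ?_
  rw [integral_finset_sum _ (fun b _ => ((CL1 _).mul_prod (CL1 _)).const_mul _)]
  refine Finset.sum_congr rfl fun b _ => ?_
  rw [integral_const_mul, integral_prod_mul (f := fun x : ℝ => (x:ℂ)^(a+b))
    (g := fun y : ℝ => (y:ℂ)^(m+n-a-b)), CL2, CL2]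

def W2 (m n : ℕ) (p : ℝ × ℝ) : ℂ :=
  ((((√π)⁻¹ * rexp (-p.1^2)) * ((√π)⁻¹ * rexp (-p.2^2)) : ℝ) : ℂ) * F m n p

lemma claimB (m n : ℕ) (p : ℝ × ℝ) :
    W2 m n p = ∑ a ∈ Finset.range (m+1), ∑ b ∈ Finset.range (n+1),
      Kc m n a b * (((((√π)⁻¹ * rexp (-p.1^2)) * p.1^(a+b) : ℝ) : ℂ)
        * ((((√π)⁻¹ * rexp (-p.2^2)) * p.2^(m+n-a-b) : ℝ) : ℂ)) := by
  rw [W2, claimA, Finset.mul_sum]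
  refine Finset.sum_congr rfl fun a _ => ?_
  rw [Finset.mul_sum]
  refine Finset.sum_congr rfl fun b _ => ?_
  push_cast
  ring

lemma SIntVol (m n : ℕ) :
    ∫ p : ℝ × ℝ, W2 m n p
      = ∑ a ∈ Finset.range (m+1), ∑ b ∈ Finset.range (n+1),
          Kc m n a b * ((Mg (a+b) : ℂ) * (Mg (m+n-a-b) : ℂ)) := by
  rw [show (fun p : ℝ × ℝ => W2 m n p) = fun p => ∑ a ∈ Finset.range (m+1),
      ∑ b ∈ Finset.range (n+1),
      Kc m n a b * (((((√π)⁻¹ * rexp (-p.1^2)) * p.1^(a+b) : ℝ) : ℂ)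
        * ((((√π)⁻¹ * rexp (-p.2^2)) * p.2^(m+n-a-b) : ℝ) : ℂ)) from funext (claimB m n),
    Measure.volume_eq_prod]
  rw [integral_finset_sum _ (fun a _ => integrable_finset_sum _ fun b _ =>
    ((CLv1 _).mul_prod (CLv1 _)).const_mul _)]
  refine Finset.sum_congr rfl fun a _ => ?_
  rw [integral_finset_sum _ (fun b _ => ((CLv1 _).mul_prod (CLv1 _)).const_mul _)]
  refine Finset.sum_congr rfl fun b _ => ?_
  rw [integral_const_mul, integral_prod_mul
    (f := fun x : ℝ => ((((√π)⁻¹ * rexp (-x^2)) * x^(a+b) : ℝ) : ℂ))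
    (g := fun y : ℝ => ((((√π)⁻¹ * rexp (-y^2)) * y^(m+n-a-b) : ℝ) : ℂ)), CLv2, CLv2]

lemma polar_eval (m n : ℕ) :
    ∫ p : ℝ × ℝ, W2 m n p = if m = n then (m.factorial : ℂ) else 0 := by
  have hππ : ((√π)⁻¹ : ℝ) * (√π)⁻¹ = π⁻¹ := by
    rw [← mul_inv, Real.mul_self_sqrt Real.pi_pos.le]
  have hpt : ∀ p : ℝ × ℝ, p.1 • W2 m n (polarCoord.symm p)
      = ((π⁻¹ * (p.1^(m+n+1) * rexp (-p.1^2)) : ℝ) : ℂ)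
        * Complex.exp (((m:ℂ) - (n:ℂ)) * p.2 * Complex.I) := by
    rintro ⟨r, θ⟩
    simp only [polarCoord_symm_apply, W2, F]
    have e1 : ((r * Real.cos θ : ℝ) : ℂ) + (r * Real.sin θ : ℝ) * Complex.I
        = (r:ℂ) * Complex.exp ((θ:ℂ) * Complex.I) := by
      rw [Complex.exp_mul_I, ← Complex.ofReal_cos, ← Complex.ofReal_sin]
      push_cast
      ring
    have e2 : ((r * Real.cos θ : ℝ) : ℂ) - (r * Real.sin θ : ℝ) * Complex.I
        = (r:ℂ) * Complex.exp (((-θ : ℝ) : ℂ) * Complex.I) := by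
      rw [Complex.exp_mul_I, ← Complex.ofReal_cos, ← Complex.ofReal_sin,
        Real.cos_neg, Real.sin_neg]
      push_cast
      ring
    have e3 : ((√π)⁻¹ * rexp (-(r * Real.cos θ)^2)) * ((√π)⁻¹ * rexp (-(r * Real.sin θ)^2))
        = π⁻¹ * rexp (-r^2) := by
      have h1 : rexp (-(r * Real.cos θ)^2) * rexp (-(r * Real.sin θ)^2) = rexp (-r^2) := by
        rw [← Real.exp_add]
        congr 1
        have := Real.sin_sq_add_cos_sq θ
        nlinarith [this]
      calc ((√π)⁻¹ * rexp (-(r * Real.cos θ)^2)) * ((√π)⁻¹ * rexp (-(r * Real.sin θ)^2))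
          = ((√π)⁻¹ * (√π)⁻¹) * (rexp (-(r * Real.cos θ)^2) * rexp (-(r * Real.sin θ)^2)) := by
            ring
        _ = π⁻¹ * rexp (-r^2) := by rw [hππ, h1]
    have e4 : ((r:ℂ) * Complex.exp ((θ:ℂ) * Complex.I))^m
          * ((r:ℂ) * Complex.exp (((-θ : ℝ) : ℂ) * Complex.I))^n
        = (r:ℂ)^(m+n) * Complex.exp (((m:ℂ) - (n:ℂ)) * θ * Complex.I) := by
      rw [mul_pow, mul_pow, ← Complex.exp_nat_mul, ← Complex.exp_nat_mul]
      rw [show ((r:ℂ)^m * Complex.exp ((m:ℂ) * ((θ:ℂ) * Complex.I)))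
            * ((r:ℂ)^n * Complex.exp ((n:ℂ) * (((-θ : ℝ) : ℂ) * Complex.I)))
          = ((r:ℂ)^m * (r:ℂ)^n) * (Complex.exp ((m:ℂ) * ((θ:ℂ) * Complex.I))
            * Complex.exp ((n:ℂ) * (((-θ : ℝ) : ℂ) * Complex.I))) by ring,
        ← pow_add, ← Complex.exp_add]
      congr 2
      push_cast
      ring
    rw [e1, e2, e3, e4, Complex.real_smul]
    push_cast
    ring
  rw [← integral_comp_polarCoord_symm (W2 m n)]
  rw [setIntegral_congr_fun polarCoord.open_target.measurableSet (fun p _ => hpt p)]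
  rw [polarCoord_target, Measure.volume_eq_prod,
    setIntegral_prod_mul (f := fun r : ℝ => ((π⁻¹ * (r^(m+n+1) * rexp (-r^2)) : ℝ) : ℂ))
      (g := fun θ : ℝ => Complex.exp (((m:ℂ) - (n:ℂ)) * θ * Complex.I))]
  by_cases hmn : m = n
  · subst hmn
    simp only [sub_self, zero_mul, Complex.exp_zero]
    rw [setIntegral_const]
    rw [Real.volume_real_Ioo_of_le (by linarith [Real.pi_pos])]
    have hr : (∫ r in Set.Ioi (0:ℝ), ((π⁻¹ * (r^(m+m+1) * rexp (-r^2)) : ℝ) : ℂ))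
        = ((π⁻¹ * (m.factorial / 2) : ℝ) : ℂ) := by
      rw [show m+m+1 = 2*m+1 by ring]
      calc (∫ r in Set.Ioi (0:ℝ), ((π⁻¹ * (r^(2*m+1) * rexp (-r^2)) : ℝ) : ℂ))
          = (((∫ r in Set.Ioi (0:ℝ), π⁻¹ * (r^(2*m+1) * rexp (-r^2))) : ℝ) : ℂ) :=
            integral_ofReal
        _ = ((π⁻¹ * (m.factorial / 2) : ℝ) : ℂ) := by
            rw [integral_const_mul, key_rint]
    rw [hr]
    simp only [if_true]
    rw [Complex.real_smul]
    push_cast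
    have hπ : (π : ℝ) ≠ 0 := Real.pi_ne_zero
    have hπc : (π:ℂ) ≠ 0 := by exact_mod_cast hπ
    field_simp
    ring
  · rw [if_neg hmn]
    have hc : ((m:ℂ) - (n:ℂ)) * Complex.I ≠ 0 :=
      mul_ne_zero (sub_ne_zero.mpr (fun h => hmn (by exact_mod_cast h))) Complex.I_ne_zero
    have hθ : (∫ θ in Set.Ioo (-π) π, Complex.exp (((m:ℂ) - (n:ℂ)) * θ * Complex.I)) = 0 := by
      have hrw : (fun θ : ℝ => Complex.exp (((m:ℂ) - (n:ℂ)) * θ * Complex.I))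
          = fun θ : ℝ => Complex.exp ((((m:ℂ) - (n:ℂ)) * Complex.I) * θ) := by
        funext θ; ring_nf
      rw [hrw, ← integral_Ioc_eq_integral_Ioo,
        ← intervalIntegral.integral_of_le (by linarith [Real.pi_pos] : -π ≤ π),
        integral_exp_mul_complex hc]
      have hexp : Complex.exp ((((m:ℂ) - (n:ℂ)) * Complex.I) * (π:ℂ))
          = Complex.exp ((((m:ℂ) - (n:ℂ)) * Complex.I) * ((-π : ℝ):ℂ)) := by
        rw [Complex.exp_eq_exp_iff_exists_int]
        refine ⟨(m:ℤ) - (n:ℤ), ?_⟩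
        push_cast
        ring
      rw [hexp, sub_self, zero_div]
    rw [hθ, mul_zero]

lemma Wint (m n : ℕ) :
    ∫ p, F m n p ∂((gaussianReal 0 (1/2)).prod (gaussianReal 0 (1/2)))
      = if m = n then (m.factorial : ℂ) else 0 := by
  rw [SInt, ← SIntVol, polar_eval]

def ψ : (ℝ × (ℝ × (ℝ × ℝ))) ≃ᵐ (ℝ × ℝ) × (ℝ × ℝ) :=
  ((MeasurableEquiv.refl ℝ).prodCongr (MeasurableEquiv.prodAssoc.symm)).trans <|
    (((MeasurableEquiv.refl ℝ).prodCongr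
      ((MeasurableEquiv.prodComm).prodCongr (MeasurableEquiv.refl ℝ)))).trans <|
      (((MeasurableEquiv.refl ℝ).prodCongr MeasurableEquiv.prodAssoc)).trans
        MeasurableEquiv.prodAssoc.symm

lemma ψ_apply (q : ℝ × (ℝ × (ℝ × ℝ))) : ψ q = ((q.1, q.2.2.1), (q.2.1, q.2.2.2)) := rfl

lemma hψ : MeasurePreserving ψ
    ((gaussianReal 0 (1/2)).prod ((gaussianReal 0 (1/2)).prod
      ((gaussianReal 0 (1/2)).prod (gaussianReal 0 (1/2)))))
    (((gaussianReal 0 (1/2)).prod (gaussianReal 0 (1/2))).prod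
      ((gaussianReal 0 (1/2)).prod (gaussianReal 0 (1/2)))) := by
  set μ := gaussianReal 0 (1/2)
  have h1 : MeasurePreserving
      (⇑((MeasurableEquiv.refl ℝ).prodCongr
        (MeasurableEquiv.prodAssoc.symm : (ℝ × (ℝ × ℝ)) ≃ᵐ (ℝ × ℝ) × ℝ)))
      (μ.prod (μ.prod (μ.prod μ))) (μ.prod ((μ.prod μ).prod μ)) :=
    (MeasurePreserving.id μ).prod
      ((measurePreserving_prodAssoc μ μ μ).symm MeasurableEquiv.prodAssoc)
  have h2 : MeasurePreserving
      (⇑((MeasurableEquiv.refl ℝ).prodCongr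
        ((MeasurableEquiv.prodComm : (ℝ × ℝ) ≃ᵐ (ℝ × ℝ)).prodCongr (MeasurableEquiv.refl ℝ))))
      (μ.prod ((μ.prod μ).prod μ)) (μ.prod ((μ.prod μ).prod μ)) :=
    (MeasurePreserving.id μ).prod
      ((Measure.measurePreserving_swap).prod (MeasurePreserving.id μ))
  have h3 : MeasurePreserving
      (⇑((MeasurableEquiv.refl ℝ).prodCongr
        (MeasurableEquiv.prodAssoc : ((ℝ × ℝ) × ℝ) ≃ᵐ ℝ × (ℝ × ℝ))))
      (μ.prod ((μ.prod μ).prod μ)) (μ.prod (μ.prod (μ.prod μ))) :=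
    (MeasurePreserving.id μ).prod (measurePreserving_prodAssoc μ μ μ)
  have h4 : MeasurePreserving
      (⇑(MeasurableEquiv.prodAssoc.symm : (ℝ × (ℝ × (ℝ × ℝ))) ≃ᵐ (ℝ × ℝ) × (ℝ × ℝ)))
      (μ.prod (μ.prod (μ.prod μ))) ((μ.prod μ).prod (μ.prod μ)) :=
    (measurePreserving_prodAssoc μ μ (μ.prod μ)).symm MeasurableEquiv.prodAssoc
  exact ((h4.comp h3).comp h2).comp h1

def coefc (s j k : ℕ) (c t : ℝ) : ℂ :=
  (s.choose j) * (s.choose k) * (c:ℂ)^(j+k) * (t:ℂ)^((s-j)+(s-k))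

lemma EXP (s : ℕ) (c t : ℝ) (q : ℝ × ℝ × ℝ × ℝ) :
    (((q.1 ^ 2 + q.2.2.1 ^ 2) ^ s *
      ((q.1 * c + q.2.1 * t) ^ 2 + (q.2.2.1 * c + q.2.2.2 * t) ^ 2) ^ s : ℝ) : ℂ)
    = ∑ j ∈ Finset.range (s+1), ∑ k ∈ Finset.range (s+1),
        coefc s j k c t *
          (F (s+j) (s+k) (q.1, q.2.2.1) * F (s-j) (s-k) (q.2.1, q.2.2.2)) := by
  obtain ⟨a1, a2, b1, b2⟩ := q
  push_cast
  set u : ℂ := (a1:ℂ) + b1 * Complex.I with hu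
  set u' : ℂ := (a1:ℂ) - b1 * Complex.I with hu'
  set v : ℂ := (a2:ℂ) + b2 * Complex.I with hv
  set v' : ℂ := (a2:ℂ) - b2 * Complex.I with hv'
  have h1 : (a1:ℂ)^2 + (b1:ℂ)^2 = u * u' := by
    rw [hu, hu']; linear_combination (b1:ℂ)^2 * Complex.I_sq
  have h2 : ((a1:ℂ)*c + a2*t)^2 + ((b1:ℂ)*c + b2*t)^2 = (u*c + v*t) * (u'*c + v'*t) := by
    rw [hu, hu', hv, hv']
    linear_combination ((b1:ℂ)*c + b2*t)^2 * Complex.I_sq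
  rw [h1, h2]
  have hF1 : ∀ m n : ℕ, F m n (a1, b1) = u^m * u'^n := fun m n => rfl
  have hF2 : ∀ m n : ℕ, F m n (a2, b2) = v^m * v'^n := fun m n => rfl
  clear_value u u' v v'
  have step1 : (u*u')^s * ((u*↑c+v*↑t)*(u'*↑c+v'*↑t))^s
      = (u^s * (u*↑c+v*↑t)^s) * (u'^s * (u'*↑c+v'*↑t)^s) := by
    rw [mul_pow, mul_pow]; ring
  rw [step1, add_pow, add_pow, Finset.mul_sum, Finset.mul_sum, Finset.sum_mul_sum]
  refine Finset.sum_congr rfl fun j hj => Finset.sum_congr rfl fun k hk => ?_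
  rw [hF1, hF2]
  simp only [coefc]
  rw [mul_pow, mul_pow, mul_pow, mul_pow]
  ring

theorem main_aux (s : ℕ) (c t : ℝ) :
    ∫ q : ℝ × ℝ × ℝ × ℝ,
        (q.1 ^ 2 + q.2.2.1 ^ 2) ^ s *
          ((q.1 * c + q.2.1 * t) ^ 2 + (q.2.2.1 * c + q.2.2.2 * t) ^ 2) ^ s
        ∂((gaussianReal 0 (1/2)).prod ((gaussianReal 0 (1/2)).prod
            ((gaussianReal 0 (1/2)).prod (gaussianReal 0 (1/2)))))
      = ∑ i ∈ Finset.range (s + 1),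
          ((s.choose i : ℝ)) ^ 2 * ((s + i).factorial : ℝ) * ((s - i).factorial : ℝ) *
            c ^ (2 * i) * t ^ (2 * (s - i)) := by
  set μ := gaussianReal 0 (1/2) with hμdef
  set PP := μ.prod (μ.prod (μ.prod μ)) with hPP
  have hint : ∀ m n m' n' : ℕ, Integrable
      (fun q : ℝ × ℝ × ℝ × ℝ => F m n (q.1, q.2.2.1) * F m' n' (q.2.1, q.2.2.2)) PP := by
    intro m n m' n'
    have hrfl : (fun q : ℝ × ℝ × ℝ × ℝ => F m n (q.1, q.2.2.1) * F m' n' (q.2.1, q.2.2.2))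
        = (fun z : (ℝ × ℝ) × (ℝ × ℝ) => F m n z.1 * F m' n' z.2) ∘ ⇑ψ := rfl
    rw [hrfl, hψ.integrable_comp_emb ψ.measurableEmbedding]
    exact (intF m n).mul_prod (intF m' n')
  have hval : ∀ m n m' n' : ℕ,
      (∫ q : ℝ × ℝ × ℝ × ℝ, F m n (q.1, q.2.2.1) * F m' n' (q.2.1, q.2.2.2) ∂PP)
        = (if m = n then (m.factorial : ℂ) else 0)
          * (if m' = n' then (m'.factorial : ℂ) else 0) := by
    intro m n m' n'
    calc (∫ q : ℝ × ℝ × ℝ × ℝ, F m n (q.1, q.2.2.1) * F m' n' (q.2.1, q.2.2.2) ∂PP)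
        = ∫ z, F m n z.1 * F m' n' z.2 ∂((μ.prod μ).prod (μ.prod μ)) :=
          hψ.integral_comp' (fun z => F m n z.1 * F m' n' z.2)
      _ = (∫ p, F m n p ∂(μ.prod μ)) * (∫ p, F m' n' p ∂(μ.prod μ)) :=
          integral_prod_mul (F m n) (F m' n')
      _ = _ := by rw [Wint, Wint]
  have key : ((∫ q : ℝ × ℝ × ℝ × ℝ,
      (q.1 ^ 2 + q.2.2.1 ^ 2) ^ s *
        ((q.1 * c + q.2.1 * t) ^ 2 + (q.2.2.1 * c + q.2.2.2 * t) ^ 2) ^ s ∂PP : ℝ) : ℂ)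
      = ((∑ i ∈ Finset.range (s + 1),
          ((s.choose i : ℝ)) ^ 2 * ((s + i).factorial : ℝ) * ((s - i).factorial : ℝ) *
            c ^ (2 * i) * t ^ (2 * (s - i)) : ℝ) : ℂ) := by
    have hsum : ∀ j ∈ Finset.range (s+1),
        (∑ k ∈ Finset.range (s+1), ∫ q : ℝ × ℝ × ℝ × ℝ, coefc s j k c t *
            (F (s+j) (s+k) (q.1, q.2.2.1) * F (s-j) (s-k) (q.2.1, q.2.2.2)) ∂PP)
          = coefc s j j c t * (((s+j).factorial : ℂ) * (((s-j).factorial : ℂ))) := by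
      intro j hj
      have hterm : ∀ k ∈ Finset.range (s+1), (∫ q : ℝ × ℝ × ℝ × ℝ, coefc s j k c t *
          (F (s+j) (s+k) (q.1, q.2.2.1) * F (s-j) (s-k) (q.2.1, q.2.2.2)) ∂PP)
            = coefc s j k c t * ((if s+j = s+k then ((s+j).factorial : ℂ) else 0)
              * (if s-j = s-k then ((s-j).factorial : ℂ) else 0)) := by
        intro k _
        rw [integral_const_mul, hval]
      rw [Finset.sum_congr rfl hterm]
      rw [Finset.sum_eq_single_of_mem j hj ?_]
      · rw [if_pos rfl, if_pos rfl]
      · intro k hk hkj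
        rw [if_neg (fun h => hkj (by omega))]
        simp
    calc ((∫ q : ℝ × ℝ × ℝ × ℝ,
        (q.1 ^ 2 + q.2.2.1 ^ 2) ^ s *
          ((q.1 * c + q.2.1 * t) ^ 2 + (q.2.2.1 * c + q.2.2.2 * t) ^ 2) ^ s ∂PP : ℝ) : ℂ)
        = ∫ q : ℝ × ℝ × ℝ × ℝ, (((q.1 ^ 2 + q.2.2.1 ^ 2) ^ s *
            ((q.1 * c + q.2.1 * t) ^ 2 + (q.2.2.1 * c + q.2.2.2 * t) ^ 2) ^ s : ℝ) : ℂ) ∂PP :=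
          (integral_ofReal).symm
      _ = ∫ q : ℝ × ℝ × ℝ × ℝ, (∑ j ∈ Finset.range (s+1), ∑ k ∈ Finset.range (s+1),
            coefc s j k c t *
              (F (s+j) (s+k) (q.1, q.2.2.1) * F (s-j) (s-k) (q.2.1, q.2.2.2))) ∂PP :=
          integral_congr_ae (Filter.Eventually.of_forall fun q => EXP s c t q)
      _ = ∑ j ∈ Finset.range (s+1), ∑ k ∈ Finset.range (s+1), ∫ q : ℝ × ℝ × ℝ × ℝ,
            coefc s j k c t *
              (F (s+j) (s+k) (q.1, q.2.2.1) * F (s-j) (s-k) (q.2.1, q.2.2.2)) ∂PP := by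
          rw [integral_finset_sum _ (fun j _ => integrable_finset_sum _ fun k _ =>
            (hint _ _ _ _).const_mul _)]
          exact Finset.sum_congr rfl fun j _ =>
            integral_finset_sum _ (fun k _ => (hint _ _ _ _).const_mul _)
      _ = ∑ j ∈ Finset.range (s+1),
            coefc s j j c t * (((s+j).factorial : ℂ) * (((s-j).factorial : ℂ))) :=
          Finset.sum_congr rfl hsum
      _ = ((∑ i ∈ Finset.range (s + 1),
          ((s.choose i : ℝ)) ^ 2 * ((s + i).factorial : ℝ) * ((s - i).factorial : ℝ) *
            c ^ (2 * i) * t ^ (2 * (s - i)) : ℝ) : ℂ) := by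
          push_cast
          refine Finset.sum_congr rfl fun i hi => ?_
          simp only [coefc]
          rw [show i + i = 2*i by ring, show (s-i)+(s-i) = 2*(s-i) by ring]
          ring
  exact_mod_cast key

end OPUaux


open MeasureTheory ProbabilityTheory

/-- For `a₁, a₂, b₁, b₂` i.i.d. `N(0, 1/2)`, arbitrary reals `c, t`, and `s : ℕ`,
`E[(a₁² + b₁²)^s ((a₁ c + a₂ t)² + (b₁ c + b₂ t)²)^s]
  = ∑_{i=0}^{s} C(s,i)² (s+i)! (s−i)! c^{2i} t^{2(s−i)}`. -/
theorem opu_two_dim_moment_even_exponent (s : ℕ) (c t : ℝ) :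
    ∫ q : ℝ × ℝ × ℝ × ℝ,
        (q.1 ^ 2 + q.2.2.1 ^ 2) ^ s *
          ((q.1 * c + q.2.1 * t) ^ 2 + (q.2.2.1 * c + q.2.2.2 * t) ^ 2) ^ s
        ∂((gaussianReal 0 (1/2)).prod ((gaussianReal 0 (1/2)).prod
            ((gaussianReal 0 (1/2)).prod (gaussianReal 0 (1/2)))))
      = ∑ i ∈ Finset.range (s + 1),
          ((s.choose i : ℝ)) ^ 2 * ((s + i).factorial : ℝ) * ((s - i).factorial : ℝ) *
            c ^ (2 * i) * t ^ (2 * (s - i)) := by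
  exact OPUaux.main_aux s c t
end
end

section
/- For all natural numbers s and a with a ≤ s, the alternating sum T_a := ∑_{i=0}^{a} (binom(s,i))² (s+i)! (s−i)! binom(s−i, a−i) (−1)^{a−i} satisfies T_a = (s!)² (binom(s,a))², where the computation is carried out in the integers. -/
/-- Finite-difference lemma: the `a`-th alternating difference of `x ↦ C(x, s)`
equals `C(x, s - a)`. -/
lemma opu_alt_choose_sum (s : ℕ) :
    ∀ a, a ≤ s → ∀ x, ∑ i ∈ Finset.range (a + 1),
      (-1 : ℤ) ^ (a - i) * (a.choose i : ℤ) * ((x + i).choose s : ℤ)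
      = ((x.choose (s - a) : ℤ)) := by
  intro a
  induction a with
  | zero => intro _ x; simp
  | succ a ih =>
    intro hs x
    have ha : a ≤ s := Nat.le_of_succ_le hs
    obtain ⟨m, hm⟩ : ∃ m, s - a = m + 1 := ⟨s - (a + 1), by omega⟩
    have hA := ih ha (x + 1)
    have hB := ih ha x
    rw [Finset.sum_range_succ'] at hB
    rw [Finset.sum_range_succ']
    have hterm : ∀ j ∈ Finset.range (a + 1),
        (-1 : ℤ) ^ (a + 1 - (j + 1)) * ((a + 1).choose (j + 1) : ℤ) *
            ((x + (j + 1)).choose s : ℤ)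
          = (-1 : ℤ) ^ (a - j) * (a.choose j : ℤ) * (((x + 1) + j).choose s : ℤ)
            - (-1 : ℤ) ^ (a - (j + 1)) * (a.choose (j + 1) : ℤ) *
                ((x + (j + 1)).choose s : ℤ) := by
      intro j hj
      have hx : x + (j + 1) = (x + 1) + j := by ring
      rw [hx, Nat.succ_sub_succ, Nat.choose_succ_succ']
      push_cast
      rcases Nat.lt_or_ge j a with h | h
      · have hpow : a - j = (a - (j + 1)) + 1 := by omega
        rw [hpow]
        ring
      · have hja : j = a := by
          simp only [Finset.mem_range] at hj; omega
        subst hja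
        simp [Nat.choose_succ_self]
    rw [Finset.sum_congr rfl hterm, Finset.sum_sub_distrib, hA]
    have hpas : ((x + 1).choose (m + 1) : ℤ) = (x.choose m : ℤ) + (x.choose (m + 1) : ℤ) := by
      exact_mod_cast congrArg (Nat.cast : ℕ → ℤ) (Nat.choose_succ_succ' x m)
    have hsub : s - (a + 1) = m := by omega
    rw [hm, hsub, hpas]
    have hB' : (-1 : ℤ) ^ (a - 0) * (a.choose 0 : ℤ) * ((x + 0).choose s : ℤ)
        = (x.choose (m + 1) : ℤ) - ∑ j ∈ Finset.range a,
            (-1 : ℤ) ^ (a - (j + 1)) * (a.choose (j + 1) : ℤ) * ((x + (j + 1)).choose s : ℤ) := by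
      rw [← hm]; linarith [hB]
    -- The last term of the subtracted sum (j = a) vanishes.
    rw [Finset.sum_range_succ]
    simp only [Nat.choose_succ_self, Nat.cast_zero, mul_zero, zero_mul, Nat.sub_self,
      pow_zero, add_zero, Nat.sub_zero, Nat.choose_zero_right, Nat.cast_one, mul_one,
      one_mul] at *
    have hneg : (-1 : ℤ) ^ (a + 1) * (x.choose s : ℤ) = -((-1 : ℤ) ^ a * (x.choose s : ℤ)) := by
      rw [pow_succ]; ring
    rw [hneg]
    linarith [hB']

/-- Per-term identity. -/
lemma opu_term (s a i : ℕ) (hi : i ≤ a) (ha : a ≤ s) :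
    (s.choose i : ℤ) ^ 2 * ((s + i).factorial : ℤ) * ((s - i).factorial : ℤ) *
        ((s - i).choose (a - i) : ℤ)
      = ((s.factorial : ℤ)) ^ 2 * (s.choose a : ℤ) * ((a.choose i : ℤ) * ((s + i).choose s : ℤ)) := by
  have his : i ≤ s := le_trans hi ha
  have h1 : (s + i).choose s * s.factorial * i.factorial = (s + i).factorial := by
    have := Nat.choose_mul_factorial_mul_factorial (Nat.le_add_right s i)
    simpa using this
  have h2 : s.choose i * i.factorial * (s - i).factorial = s.factorial :=
    Nat.choose_mul_factorial_mul_factorial his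
  have h3 : s.choose a * a.choose i = s.choose i * (s - i).choose (a - i) :=
    Nat.choose_mul hi
  have h1' : ((s + i).choose s : ℤ) * (s.factorial : ℤ) * (i.factorial : ℤ)
      = ((s + i).factorial : ℤ) := by exact_mod_cast h1
  have h2' : (s.choose i : ℤ) * (i.factorial : ℤ) * ((s - i).factorial : ℤ)
      = (s.factorial : ℤ) := by exact_mod_cast h2
  have h3' : (s.choose a : ℤ) * (a.choose i : ℤ)
      = (s.choose i : ℤ) * ((s - i).choose (a - i) : ℤ) := by exact_mod_cast h3
  rw [← h1']
  linear_combination (((s + i).choose s : ℤ) * (s.factorial : ℤ) * (s.choose i : ℤ) *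
      ((s - i).choose (a - i) : ℤ)) * h2' - ((s.factorial : ℤ) ^ 2 * ((s + i).choose s : ℤ)) * h3'

/-- The alternating sum
`T_a = ∑_{i=0}^{a} C(s,i)² (s+i)! (s−i)! C(s−i, a−i) (−1)^{a−i}` equals `(s!)² C(s,a)²`. -/
theorem opu_alternating_sum (s a : ℕ) (ha : a ≤ s) :
    ∑ i ∈ Finset.range (a + 1),
        ((s.choose i : ℤ)) ^ 2 * ((s + i).factorial : ℤ) * ((s - i).factorial : ℤ) *
          ((s - i).choose (a - i) : ℤ) * (-1) ^ (a - i)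
      = ((s.factorial : ℤ)) ^ 2 * ((s.choose a : ℤ)) ^ 2 := by
  have key := opu_alt_choose_sum s a ha s
  rw [Nat.choose_symm ha] at key
  calc ∑ i ∈ Finset.range (a + 1),
        ((s.choose i : ℤ)) ^ 2 * ((s + i).factorial : ℤ) * ((s - i).factorial : ℤ) *
          ((s - i).choose (a - i) : ℤ) * (-1) ^ (a - i)
      = ∑ i ∈ Finset.range (a + 1),
          ((s.factorial : ℤ)) ^ 2 * (s.choose a : ℤ) *
            ((-1 : ℤ) ^ (a - i) * (a.choose i : ℤ) * ((s + i).choose s : ℤ)) := by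
        refine Finset.sum_congr rfl fun i hi => ?_
        have hi' : i ≤ a := Nat.lt_succ_iff.mp (Finset.mem_range.mp hi)
        rw [opu_term s a i hi' ha]
        ring
    _ = ((s.factorial : ℤ)) ^ 2 * (s.choose a : ℤ) * ∑ i ∈ Finset.range (a + 1),
          (-1 : ℤ) ^ (a - i) * (a.choose i : ℤ) * ((s + i).choose s : ℤ) := by
        rw [Finset.mul_sum]
    _ = ((s.factorial : ℤ)) ^ 2 * ((s.choose a : ℤ)) ^ 2 := by
        rw [key]; ring
end

section
/- For every natural number s and every real number c, ∑_{i=0}^{s} (binom(s,i))² (s+i)! (s−i)! c^{2i} (1 − c²)^{s−i} = (s!)² ∑_{a=0}^{s} (binom(s,a))² c^{2a}. -/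
open Finset

/-- Subset-of-a-subset identity, unconditional version. -/
lemma opu_aux_choose (s a k : ℕ) :
    s.choose (a + k) * (a + k).choose a = s.choose a * (s - a).choose k := by
  by_cases h : a + k ≤ s
  · have := Nat.choose_mul (n := s) (Nat.le_add_right a k)
    simpa [Nat.add_sub_cancel_left] using this
  · push_neg at h
    rw [Nat.choose_eq_zero_of_lt h, Nat.zero_mul]
    by_cases ha : a ≤ s
    · have hk : s - a < k := by omega
      rw [Nat.choose_eq_zero_of_lt hk, Nat.mul_zero]
    · push_neg at ha
      rw [Nat.choose_eq_zero_of_lt ha, Nat.zero_mul]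

/-- Vandermonde, in the form we need. -/
lemma opu_vander (s i : ℕ) (hi : i ≤ s) :
    ∑ a ∈ range (s + 1), s.choose a * i.choose a = (s + i).choose i := by
  rw [Nat.add_choose_eq, Finset.Nat.sum_antidiagonal_eq_sum_range_succ_mk]
  have h1 : ∑ a ∈ range (i + 1), s.choose a * i.choose a
      = ∑ a ∈ range (s + 1), s.choose a * i.choose a := by
    refine Finset.sum_subset (Finset.range_subset_range.mpr (by omega)) fun a _ ha => ?_
    have : i < a := by
      simp only [Finset.mem_range] at ha; omega
    simp [Nat.choose_eq_zero_of_lt this]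
  rw [← h1]
  refine Finset.sum_congr rfl fun a ha => ?_
  have : a ≤ i := by simp only [Finset.mem_range] at ha; omega
  rw [Nat.choose_symm this]

lemma opu_fact (s i : ℕ) (hi : i ≤ s) :
    s.choose i * (s + i).factorial * (s - i).factorial
      = s.factorial * s.factorial * (s + i).choose i := by
  have h1 : (s + i).choose i * i.factorial * s.factorial = (s + i).factorial := by
    have := Nat.choose_mul_factorial_mul_factorial (Nat.le_add_left i s)
    simpa [Nat.add_sub_cancel] using this
  have h2 := Nat.choose_mul_factorial_mul_factorial hi
  calc s.choose i * (s + i).factorial * (s - i).factorial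
      = (s.choose i * i.factorial * (s - i).factorial) * ((s + i).choose i * s.factorial) := by
        rw [← h1]; ring
    _ = s.factorial * s.factorial * (s + i).choose i := by rw [h2]; ring

/-- For every natural `s` and real `c`,
`∑_{i=0}^{s} C(s,i)² (s+i)! (s−i)! c^{2i} (1 − c²)^{s−i} = (s!)² ∑_{a=0}^{s} C(s,a)² c^{2a}`. -/
theorem opu_kernel_polynomial_identity (s : ℕ) (c : ℝ) :
    ∑ i ∈ Finset.range (s + 1),
        ((s.choose i : ℝ)) ^ 2 * ((s + i).factorial : ℝ) * ((s - i).factorial : ℝ) *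
          c ^ (2 * i) * (1 - c ^ 2) ^ (s - i)
      = ((s.factorial : ℝ)) ^ 2 *
          ∑ a ∈ Finset.range (s + 1), ((s.choose a : ℝ)) ^ 2 * c ^ (2 * a) := by
  simp only [pow_mul]
  set x : ℝ := c ^ 2 with hx
  rw [Finset.mul_sum]
  have step1 : ∀ a ∈ Finset.range (s + 1),
      ((s.factorial : ℝ)) ^ 2 * ((s.choose a : ℝ) ^ 2 * x ^ a)
        = ∑ i ∈ Finset.range (s + 1),
            ((s.factorial : ℝ)) ^ 2 * (s.choose a : ℝ) * (s.choose i : ℝ) * (i.choose a : ℝ)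
              * x ^ i * (1 - x) ^ (s - i) := by
    intro a ha
    have ha' : a ≤ s := by simp only [Finset.mem_range] at ha; omega
    have e1 : (x + (1 - x)) ^ (s - a) = 1 := by norm_num
    have h0 : ((s.factorial : ℝ)) ^ 2 * ((s.choose a : ℝ) ^ 2 * x ^ a)
        = ∑ k ∈ Finset.range (s - a + 1),
            ((s.factorial : ℝ)) ^ 2 * (s.choose a : ℝ) ^ 2 * ((s - a).choose k : ℝ)
              * x ^ (a + k) * (1 - x) ^ (s - a - k) := by
      calc ((s.factorial : ℝ)) ^ 2 * ((s.choose a : ℝ) ^ 2 * x ^ a)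
          = ((s.factorial : ℝ)) ^ 2 * ((s.choose a : ℝ) ^ 2 * x ^ a) * (x + (1 - x)) ^ (s - a) := by
            rw [e1, mul_one]
        _ = ((s.factorial : ℝ)) ^ 2 * ((s.choose a : ℝ) ^ 2 * x ^ a) *
              ∑ k ∈ Finset.range (s - a + 1),
                x ^ k * (1 - x) ^ (s - a - k) * ((s - a).choose k : ℝ) := by rw [add_pow]
        _ = _ := by
            rw [Finset.mul_sum]
            refine Finset.sum_congr rfl fun k _ => ?_
            rw [pow_add]; ring
    have h1 : ∑ k ∈ Finset.range (s - a + 1),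
          ((s.factorial : ℝ)) ^ 2 * (s.choose a : ℝ) ^ 2 * ((s - a).choose k : ℝ)
            * x ^ (a + k) * (1 - x) ^ (s - a - k)
        = ∑ k ∈ Finset.range (s + 1),
          ((s.factorial : ℝ)) ^ 2 * (s.choose a : ℝ) ^ 2 * ((s - a).choose k : ℝ)
            * x ^ (a + k) * (1 - x) ^ (s - a - k) := by
      refine Finset.sum_subset (Finset.range_subset_range.mpr (by omega)) fun k _ hk => ?_
      have : s - a < k := by simp only [Finset.mem_range] at hk ⊢; omega
      simp [Nat.choose_eq_zero_of_lt this]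
    -- pointwise rewrite to F (a + k)
    set F : ℕ → ℝ := fun i =>
      ((s.factorial : ℝ)) ^ 2 * (s.choose a : ℝ) * (s.choose i : ℝ) * (i.choose a : ℝ)
        * x ^ i * (1 - x) ^ (s - i) with hF
    have h2 : ∀ k, ((s.factorial : ℝ)) ^ 2 * (s.choose a : ℝ) ^ 2 * ((s - a).choose k : ℝ)
          * x ^ (a + k) * (1 - x) ^ (s - a - k) = F (a + k) := by
      intro k
      have hc : ((s.choose (a + k) * (a + k).choose a : ℕ) : ℝ)
          = ((s.choose a * (s - a).choose k : ℕ) : ℝ) := by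
        exact_mod_cast congrArg (Nat.cast : ℕ → ℝ) (opu_aux_choose s a k)
      push_cast at hc
      rw [hF]
      simp only [Nat.sub_sub]
      linear_combination (-(((s.factorial : ℝ)) ^ 2 * (s.choose a : ℝ) * x ^ (a + k) * (1 - x) ^ (s - (a + k)))) * hc
    have h3 : ∑ k ∈ Finset.range (s + 1), F (a + k) = ∑ i ∈ Finset.range (s + 1), F i := by
      have hshift : ∑ k ∈ Finset.range (s + 1), F (a + k)
          = ∑ i ∈ Finset.Ico a (a + (s + 1)), F i := by
        rw [Finset.sum_Ico_eq_sum_range]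
        simp
      have hFlo : ∀ i, i < a → F i = 0 := by
        intro i h
        rw [hF]; simp [Nat.choose_eq_zero_of_lt h]
      have hFhi : ∀ i, s < i → F i = 0 := by
        intro i h
        rw [hF]; simp [Nat.choose_eq_zero_of_lt h]
      have e2 : ∑ i ∈ Finset.Ico a (a + (s + 1)), F i = ∑ i ∈ Finset.range (a + (s + 1)), F i := by
        refine Finset.sum_subset (fun i hi => ?_) (fun i _ hi => ?_)
        · simp only [Finset.mem_Ico] at hi; simp only [Finset.mem_range]; omega
        · simp only [Finset.mem_Ico] at hi
          by_cases hlo : i < a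
          · exact hFlo i hlo
          · exact hFhi i (by simp only [Finset.mem_range] at *; omega)
      have e3 : ∑ i ∈ Finset.range (s + 1), F i = ∑ i ∈ Finset.range (a + (s + 1)), F i := by
        refine Finset.sum_subset (Finset.range_subset_range.mpr (by omega)) fun i _ hi => ?_
        exact hFhi i (by simp only [Finset.mem_range] at hi ⊢; omega)
      rw [hshift, e2, ← e3]
    rw [h0, h1]
    calc ∑ k ∈ Finset.range (s + 1),
          ((s.factorial : ℝ)) ^ 2 * (s.choose a : ℝ) ^ 2 * ((s - a).choose k : ℝ)
            * x ^ (a + k) * (1 - x) ^ (s - a - k)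
        = ∑ k ∈ Finset.range (s + 1), F (a + k) := Finset.sum_congr rfl fun k _ => h2 k
      _ = ∑ i ∈ Finset.range (s + 1), F i := h3
  rw [Finset.sum_congr rfl step1, Finset.sum_comm]
  refine Finset.sum_congr rfl fun i hi => ?_
  have hi' : i ≤ s := by simp only [Finset.mem_range] at hi; omega
  have hsum : ∑ a ∈ Finset.range (s + 1), ((s.choose a : ℝ) * (i.choose a : ℝ))
      = ((s + i).choose i : ℝ) := by exact_mod_cast opu_vander s i hi'
  have hfact : ((s.choose i : ℝ)) * ((s + i).factorial : ℝ) * ((s - i).factorial : ℝ)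
      = (s.factorial : ℝ) * (s.factorial : ℝ) * ((s + i).choose i : ℝ) := by
    exact_mod_cast congrArg (Nat.cast : ℕ → ℝ) (opu_fact s i hi')
  calc ((s.choose i : ℝ)) ^ 2 * ((s + i).factorial : ℝ) * ((s - i).factorial : ℝ)
        * x ^ i * (1 - x) ^ (s - i)
      = ((s.choose i : ℝ) * (((s.choose i : ℝ)) * ((s + i).factorial : ℝ) * ((s - i).factorial : ℝ)))
          * x ^ i * (1 - x) ^ (s - i) := by ring
    _ = ((s.choose i : ℝ) * ((s.factorial : ℝ) * (s.factorial : ℝ) * ((s + i).choose i : ℝ)))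
          * x ^ i * (1 - x) ^ (s - i) := by rw [hfact]
    _ = ((s.factorial : ℝ)) ^ 2 * (s.choose i : ℝ) * x ^ i * (1 - x) ^ (s - i)
          * ∑ a ∈ Finset.range (s + 1), ((s.choose a : ℝ) * (i.choose a : ℝ)) := by
        rw [hsum]; ring
    _ = ∑ a ∈ Finset.range (s + 1),
          ((s.factorial : ℝ)) ^ 2 * (s.choose a : ℝ) * (s.choose i : ℝ) * (i.choose a : ℝ)
            * x ^ i * (1 - x) ^ (s - i) := by
        rw [Finset.mul_sum]
        exact Finset.sum_congr rfl fun a _ => by ring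
end
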